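/- Suppose x ≠ 0 and 0 < t ≤ n/‖x‖₂². Then for all real β and β₀, the majorization inequality l(β) ≤ l(β₀) + (β − β₀) · l'(β₀) + (1/(2t)) (β − β₀)² holds. -/

import Mathlib

open Finset

/-- majorization of the quadratic loss `l(β) = (1/(2n))‖r − xβ‖₂²`
by its first-order expansion plus `(1/(2t))(β − β₀)²`, valid whenever
`0 < t ≤ n/‖x‖₂²`. -/
theorem quadratic_loss_majorization
    (n : ℕ) (hn : 0 < n) (r x : Fin n → ℝ) (hx : x ≠ 0)
    (t : ℝ) (ht : 0 < t) (ht' : t ≤ (n : ℝ) / ∑ i, (x i) ^ 2)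
    (l : ℝ → ℝ) (hl : ∀ β, l β = 1 / (2 * (n : ℝ)) * ∑ i, (r i - x i * β) ^ 2)
    (l' : ℝ → ℝ) (hl' : ∀ β, l' β = -(1 / (n : ℝ)) * ∑ i, x i * (r i - x i * β))
    (β β₀ : ℝ) :
    l β ≤ l β₀ + (β - β₀) * l' β₀ + 1 / (2 * t) * (β - β₀) ^ 2 := by
  set S := ∑ i, (x i) ^ 2 with hSdef
  have hS : 0 < S := by
    have : ∃ i, x i ≠ 0 := by
      by_contra h
      push_neg at h
      exact hx (funext h)
    obtain ⟨i, hi⟩ := this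
    exact Finset.sum_pos' (fun j _ => sq_nonneg _)
      ⟨i, Finset.mem_univ i, by positivity⟩
  have hn' : (0 : ℝ) < n := by exact_mod_cast hn
  have hkey : l β = l β₀ + (β - β₀) * l' β₀ + 1 / (2 * n) * S * (β - β₀) ^ 2 := by
    rw [hl, hl, hl']
    have e1 : ∑ i, (r i - x i * β) ^ 2
        = (∑ i, (r i - x i * β₀) ^ 2)
          - 2 * (β - β₀) * (∑ i, x i * (r i - x i * β₀))
          + (β - β₀) ^ 2 * S := by
      rw [hSdef, Finset.mul_sum, Finset.mul_sum, ← Finset.sum_sub_distrib,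
        ← Finset.sum_add_distrib]
      apply Finset.sum_congr rfl
      intro i _
      ring
    rw [e1]
    set A := ∑ i, (r i - x i * β₀) ^ 2
    set B := ∑ i, x i * (r i - x i * β₀)
    field_simp
    ring
  rw [hkey]
  gcongr l β₀ + (β - β₀) * l' β₀ + ?_
  have hts : t * S ≤ n := by
    rw [div_eq_mul_inv] at ht'
    nlinarith [mul_le_mul_of_nonneg_right ht' (le_of_lt hS),
      mul_inv_cancel₀ (ne_of_gt hS)]
  have h1 : 1 / (2 * (n:ℝ)) * S ≤ 1 / (2 * t) := by
    rw [div_mul_eq_mul_div, one_mul, div_le_div_iff₀ (by positivity) (by positivity)]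
    nlinarith
  nlinarith [sq_nonneg (β - β₀), mul_le_mul_of_nonneg_right h1 (sq_nonneg (β - β₀))]
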